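/- Let G ≤ GL_d(𝔽_q) be a matrix group, a ∈ GL_d(𝔽_q), and σ the automorphism of G given by σ(x) = a x a^{-1} (assume σ maps G to G). Define Φ : M_d(𝔽_q) → M_d(𝔽_q) by Φ(X) = g · a X a^{-1}, for a fixed g ∈ G. Then Φ is an invertible 𝔽_q-linear transformation of M_d(𝔽_q), and for every natural number t, ρ_{(g,1)^t}(1_G) = Φ^t(I_d). Hence the SDLP for (g, h) is equivalent to the Orbit Problem instance: find t with h = Φ^t(I_d). -/
import Mathlib


/-- Multiplication in the semidirect product `G ⋊_σ ℕ`: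
`(g,s)(g',s') = (g·σ^s(g'), s+s')`. -/
def sdMulA {G : Type*} [Group G] (σ : MulAut G) (x y : G × ℕ) : G × ℕ :=
  (x.1 * (σ ^ x.2) y.1, x.2 + y.2)

/-- The `t`-th power in the semidirect product `G ⋊_σ ℕ`. -/
def sdPowA {G : Type*} [Group G] (σ : MulAut G) (x : G × ℕ) : ℕ → G × ℕ
  | 0 => (1, 0)
  | t + 1 => sdMulA σ x (sdPowA σ x t)

/-- The transformation `ρ_{(g,s)} : G → G`, `x ↦ g·σ^s(x)`. -/
def rhoA {G : Type*} [Group G] (σ : MulAut G) (x : G × ℕ) : G → G :=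
  fun z => x.1 * (σ ^ x.2) z

/-- The linear map `Φ : M_d(𝔽_q) → M_d(𝔽_q)`, `Φ(X) = g·(a X a⁻¹)`. -/
def PhiMap {d : ℕ} {F : Type*} [Field F]
    (a g : (Matrix (Fin d) (Fin d) F)ˣ) :
    Matrix (Fin d) (Fin d) F → Matrix (Fin d) (Fin d) F :=
  fun X => (g : Matrix (Fin d) (Fin d) F) *
    ((a : Matrix (Fin d) (Fin d) F) * X * ((a⁻¹ : (Matrix (Fin d) (Fin d) F)ˣ) : Matrix (Fin d) (Fin d) F))

/-- for a matrix group `G ≤ GL_d(𝔽_q)`, `σ(x) = a x a⁻¹` mapping `G` to `G`,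
and `g ∈ G`, the map `Φ(X) = g·a X a⁻¹` is an invertible `𝔽_q`-linear transformation of
`M_d(𝔽_q)` and `ρ_{(g,1)^t}(1_G) = Φ^t(I_d)` for all `t`; hence the SDLP is an instance
of the Orbit Problem. -/
theorem sdlp_orbit_problem {d : ℕ} {F : Type*} [Field F] [Fintype F]
    (Gr : Subgroup (Matrix (Fin d) (Fin d) F)ˣ)
    (a : (Matrix (Fin d) (Fin d) F)ˣ)
    (hσ : ∀ x ∈ Gr, a * x * a⁻¹ ∈ Gr)
    (g : (Matrix (Fin d) (Fin d) F)ˣ) (hg : g ∈ Gr) :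
    IsLinearMap F (PhiMap a g) ∧
    Function.Bijective (PhiMap a g) ∧
    ∀ t : ℕ,
      ((rhoA (MulAut.conj a) (sdPowA (MulAut.conj a) (g, 1) t) 1 :
          (Matrix (Fin d) (Fin d) F)ˣ) : Matrix (Fin d) (Fin d) F)
        = (PhiMap a g)^[t] 1 := by

  constructor
  · constructor
    · intro x y
      simp [PhiMap, Matrix.mul_add, Matrix.add_mul]
    · intro c x
      simp [PhiMap, Matrix.mul_smul, Matrix.smul_mul]
  constructor
  · have : Function.LeftInverse
        (fun X => ((a⁻¹ : (Matrix (Fin d) (Fin d) F)ˣ) : Matrix (Fin d) (Fin d) F) *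
          (((g⁻¹ : (Matrix (Fin d) (Fin d) F)ˣ) : Matrix (Fin d) (Fin d) F) * X) *
          (a : Matrix (Fin d) (Fin d) F)) (PhiMap a g) ∧
        Function.RightInverse
        (fun X => ((a⁻¹ : (Matrix (Fin d) (Fin d) F)ˣ) : Matrix (Fin d) (Fin d) F) *
          (((g⁻¹ : (Matrix (Fin d) (Fin d) F)ˣ) : Matrix (Fin d) (Fin d) F) * X) *
          (a : Matrix (Fin d) (Fin d) F)) (PhiMap a g) := by
      have ha : IsUnit (a : Matrix (Fin d) (Fin d) F).det :=
        (Matrix.isUnit_iff_isUnit_det _).mp a.isUnit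
      have hgd : IsUnit (g : Matrix (Fin d) (Fin d) F).det :=
        (Matrix.isUnit_iff_isUnit_det _).mp g.isUnit
      constructor <;> intro X <;>
        simp [PhiMap, Matrix.mul_assoc, Matrix.nonsing_inv_mul _ ha,
          Matrix.mul_nonsing_inv _ ha, Matrix.nonsing_inv_mul _ hgd,
          Matrix.mul_nonsing_inv _ hgd, Matrix.nonsing_inv_mul_cancel_left _ _ ha,
          Matrix.mul_nonsing_inv_cancel_left _ _ ha,
          Matrix.nonsing_inv_mul_cancel_left _ _ hgd,
          Matrix.mul_nonsing_inv_cancel_left _ _ hgd]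
    exact ⟨this.1.injective, this.2.surjective⟩
  · intro t
    induction t with
    | zero => simp [rhoA, sdPowA, PhiMap]
    | succ t ih =>
      rw [Function.iterate_succ_apply']
      have h1 : (sdPowA (MulAut.conj a) (g, 1) (t+1)).1
          = g * a * (sdPowA (MulAut.conj a) (g, 1) t).1 * a⁻¹ := by
        simp [sdPowA, sdMulA, MulAut.conj_apply, mul_assoc]
      simp only [rhoA, map_one, mul_one] at ih ⊢
      rw [h1]
      rw [← ih]
      simp [PhiMap, Units.val_mul, Matrix.mul_assoc]
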